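/- arXiv:1906.09160 — 2 statements merged into one kernel-verified Lean document; each statement's English description precedes it below -/
import Mathlib

section
/- Let R be a ring with elements t0, t1, t0v, t1v satisfying t0 + t1 + t0v + t1v = -1, such that each of t0^2, t1^2, t0v^2, t1v^2 is central in R. Then t0 commutes with (t0v + t1v)(t0v + t1v + 2). -/
/-- In the universal additive DAHA relations, `t0` commutes with
`(t0v + t1v)(t0v + t1v + 2)`. -/
theorem stmt_2 {R : Type*} [Ring R] (t0 t1 t0v t1v : R)
    (hsum : t0 + t1 + t0v + t1v = -1)
    (h0 : ∀ r : R, t0 ^ 2 * r = r * t0 ^ 2)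
    (h1 : ∀ r : R, t1 ^ 2 * r = r * t1 ^ 2)
    (h0v : ∀ r : R, t0v ^ 2 * r = r * t0v ^ 2)
    (h1v : ∀ r : R, t1v ^ 2 * r = r * t1v ^ 2) :
    t0 * ((t0v + t1v) * (t0v + t1v + 2)) = ((t0v + t1v) * (t0v + t1v + 2)) * t0 := by
  have hs : t0v + t1v = -(t0 + t1) - 1 := by
    linear_combination (norm := noncomm_ring) hsum
  have hX : (t0v + t1v) * (t0v + t1v + 2) = (t0 + t1) ^ 2 - 1 := by
    rw [hs]; noncomm_ring
  rw [hX]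
  have e1 : t0 * ((t0 + t1) ^ 2 - 1)
      = t0 ^ 3 + t0 ^ 2 * t1 + t0 * t1 * t0 + t0 * t1 ^ 2 - t0 := by
    noncomm_ring
  have e2 : ((t0 + t1) ^ 2 - 1) * t0
      = t0 ^ 3 + t0 * t1 * t0 + t1 * t0 ^ 2 + t1 ^ 2 * t0 - t0 := by
    noncomm_ring
  rw [e1, e2, h0 t1, ← h1 t0]
  noncomm_ring
end

section
/- Let R be a ring with elements t0, t1, t0v, t1v satisfying t0 + t1 + t0v + t1v = -1, such that each of t0^2, t1^2, t0v^2, t1v^2 is central in R. Then t0 commutes with (t1 + t1v)(t1 + t1v + 2). -/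
/-- In the universal additive DAHA relations, `t0` commutes with
`(t1 + t1v)(t1 + t1v + 2)`. -/
theorem stmt_3 {R : Type*} [Ring R] (t0 t1 t0v t1v : R)
    (hsum : t0 + t1 + t0v + t1v = -1)
    (h0 : ∀ r : R, t0 ^ 2 * r = r * t0 ^ 2)
    (h1 : ∀ r : R, t1 ^ 2 * r = r * t1 ^ 2)
    (h0v : ∀ r : R, t0v ^ 2 * r = r * t0v ^ 2)
    (h1v : ∀ r : R, t1v ^ 2 * r = r * t1v ^ 2) :
    t0 * ((t1 + t1v) * (t1 + t1v + 2)) = ((t1 + t1v) * (t1 + t1v + 2)) * t0 := by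
  have hs : t1 + t1v = -1 - t0 - t0v := by
    rw [← hsum]; abel
  rw [hs]
  linear_combination (norm := noncomm_ring) h0 t0v - h0v t0
end
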